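/- Let G be a finite simple graph and let ã(G) denote the number of acyclic orientations of G such that within each of a given collection of disjoint cliques with prescribed linear orders, the orientation agrees with the prescribed order. If the graph T has vertex set the disjoint union over F of {F} × {1,...,m(F)} (for a finite index family and m : index → ℕ), with edges between distinct vertices (F,i), (F',i') whenever F ∩ F' ≠ ∅, and the prescribed orders are (F,i) → (F,i') for i < i' within each F, then the number of such restricted acyclic orientations equals a(T) / (∏_F m(F)!), where a(T) is the total number of acyclic orientations of T. -/

import Mathlib

/-- An orientation of a simple graph `G`, encoded as the edge set `d` of a digraph. -/
def IsOrientation {V : Type*} (G : SimpleGraph V) (d : Set (V × V)) : Prop :=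
  (∀ u v : V, ((u, v) ∈ d ∨ (v, u) ∈ d) ↔ G.Adj u v) ∧
    ∀ u v : V, (u, v) ∈ d → (v, u) ∉ d

/-- An orientation is acyclic if the resulting digraph has no directed cycle. -/
def IsAcyclicOrientation {V : Type*} (G : SimpleGraph V) (d : Set (V × V)) : Prop :=
  IsOrientation G d ∧ ∀ v : V, ¬ Relation.TransGen (fun a b => (a, b) ∈ d) v v

/-- The graph `T` on vertex set `⋃_F {F} × {1,…,m(F)}` in which two distinct vertices
`(F,i)`, `(F',i')` are adjacent iff `S F ∩ S F' ≠ ∅`. -/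
def graphT {ι α : Type*} [DecidableEq α] (S : ι → Finset α) (m : ι → ℕ) :
    SimpleGraph (Σ F : ι, Fin (m F)) where
  Adj u v := u ≠ v ∧ (S u.1 ∩ S v.1).Nonempty
  symm := by
    constructor
    rintro u v ⟨h, ⟨a, ha⟩⟩
    refine ⟨h.symm, ⟨a, ?_⟩⟩
    simp only [Finset.mem_inter] at ha ⊢
    tauto
  loopless := by constructor; rintro u ⟨h, -⟩; exact h rfl

namespace Stmt1Aux

/-- A strictMono permutation of `Fin n` is the identity. -/
lemma perm_eq_one_of_strictMono {n : ℕ} (f : Equiv.Perm (Fin n)) (hf : StrictMono (f : Fin n → Fin n)) :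
    f = 1 := by
  haveI : WellFoundedLT (Fin n) := inferInstance
  have hinv : StrictMono ((f⁻¹ : Equiv.Perm (Fin n)) : Fin n → Fin n) := by
    intro a b h
    rw [← hf.lt_iff_lt]
    simpa using h
  ext i
  have h1 : i ≤ f i := hf.le_apply
  have h2 : f i ≤ f⁻¹ (f i) := hinv.le_apply
  simp only [Equiv.Perm.inv_def, Equiv.symm_apply_apply] at h2
  exact congrArg Fin.val (le_antisymm h2 h1)

/-- Any strict linear order on `Fin n` is carried to `<` by some permutation. -/
lemma exists_perm_order {n : ℕ} (r : Fin n → Fin n → Prop)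
    (hasymm : ∀ i j, r i j → ¬ r j i)
    (htrans : ∀ i j k, r i j → r j k → r i k)
    (htot : ∀ i j, i ≠ j → r i j ∨ r j i) :
    ∃ σ : Equiv.Perm (Fin n), ∀ i j, r (σ i) (σ j) ↔ i < j := by
  classical
  set r' : Fin n → Fin n → Prop := fun a b => r a b ∨ a = b with hr'
  haveI : IsTotal (Fin n) r' := ⟨fun a b => by
    rcases eq_or_ne a b with h | h
    · exact Or.inl (Or.inr h)
    · rcases htot a b h with h' | h'
      · exact Or.inl (Or.inl h')
      · exact Or.inr (Or.inl h')⟩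
  haveI : IsTrans (Fin n) r' := ⟨fun a b c hab hbc => by
    rcases hab with hab | rfl
    · rcases hbc with hbc | rfl
      · exact Or.inl (htrans _ _ _ hab hbc)
      · exact Or.inl hab
    · exact hbc⟩
  haveI : IsAntisymm (Fin n) r' := ⟨fun a b hab hba => by
    rcases hab with hab | rfl
    · rcases hba with hba | rfl
      · exact absurd hba (hasymm _ _ hab)
      · rfl
    · rfl⟩
  set l : List (Fin n) := Finset.univ.sort r' with hl
  have hlen : l.length = n := by
    rw [hl, Finset.length_sort, Finset.card_univ, Fintype.card_fin]
  set f : Fin n → Fin n := fun i => l.get (Fin.cast hlen.symm i) with hf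
  have hinj : Function.Injective f := by
    intro a b hab
    have := (List.nodup_iff_injective_get.mp (Finset.sort_nodup Finset.univ r')) hab
    simpa [Fin.ext_iff] using this
  have hbij : Function.Bijective f := (Finite.injective_iff_bijective).mp hinj
  refine ⟨Equiv.ofBijective f hbij, fun i j => ?_⟩
  have key : ∀ i j : Fin n, i < j → r (f i) (f j) := by
    intro i j hij
    have hs : l.Pairwise r' := Finset.pairwise_sort Finset.univ r'
    have := hs.rel_get_of_lt (a := Fin.cast hlen.symm i) (b := Fin.cast hlen.symm j) (by simpa using hij)
    rcases this with h | h
    · exact h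
    · exact absurd (hinj h) hij.ne
  simp only [Equiv.ofBijective_apply]
  constructor
  · intro h
    rcases lt_trichotomy i j with h' | h' | h'
    · exact h'
    · subst h'; exact absurd h (hasymm _ _ h)
    · exact absurd (key _ _ h') (hasymm _ _ h)
  · exact key i j

variable {ι α : Type} [DecidableEq α] {m : ι → ℕ} {S : ι → Finset α}

abbrev V (m : ι → ℕ) := Σ F : ι, Fin (m F)

def ve (σ : ∀ F, Equiv.Perm (Fin (m F))) : V m → V m := fun x => ⟨x.1, σ x.1 x.2⟩

lemma ve_inv_ve (σ : ∀ F, Equiv.Perm (Fin (m F))) (x : V m) :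
    ve (fun F => (σ F)⁻¹) (ve σ x) = x := by
  cases x; simp [ve, Equiv.Perm.inv_def]; exact (σ _).symm_apply_apply _

lemma ve_ve_inv (σ : ∀ F, Equiv.Perm (Fin (m F))) (x : V m) :
    ve σ (ve (fun F => (σ F)⁻¹) x) = x := by
  cases x; simp [ve, Equiv.Perm.inv_def]; exact (σ _).apply_symm_apply _

lemma ve_injective (σ : ∀ F, Equiv.Perm (Fin (m F))) : Function.Injective (ve σ) := by
  intro a b h
  have := congrArg (ve (fun F => (σ F)⁻¹)) h
  rwa [ve_inv_ve, ve_inv_ve] at this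

def act (σ : ∀ F, Equiv.Perm (Fin (m F))) (d : Set (V m × V m)) : Set (V m × V m) :=
  {p | (ve (fun F => (σ F)⁻¹) p.1, ve (fun F => (σ F)⁻¹) p.2) ∈ d}

lemma mem_act_ve (σ : ∀ F, Equiv.Perm (Fin (m F))) (d : Set (V m × V m)) (u v : V m) :
    (ve σ u, ve σ v) ∈ act σ d ↔ (u, v) ∈ d := by
  simp [act, ve_inv_ve]

lemma act_act_inv (σ : ∀ F, Equiv.Perm (Fin (m F))) (d : Set (V m × V m)) :
    act σ (act (fun F => (σ F)⁻¹) d) = d := by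
  ext ⟨u, v⟩
  simp only [act, Set.mem_setOf_eq]
  have h : ∀ x : V m, ve (fun F => ((σ F)⁻¹)⁻¹) (ve (fun F => (σ F)⁻¹) x) = x := by
    intro x; cases x; simp [ve, Equiv.Perm.inv_def]; exact (σ _).apply_symm_apply _
  rw [h, h]

lemma adj_ve (σ : ∀ F, Equiv.Perm (Fin (m F))) (u v : V m) :
    (graphT S m).Adj (ve σ u) (ve σ v) ↔ (graphT S m).Adj u v := by
  show (ve σ u ≠ ve σ v ∧ _) ↔ (u ≠ v ∧ _)
  rw [(ve_injective σ).ne_iff]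
  exact Iff.rfl

lemma isAcyclicOrientation_act (σ : ∀ F, Equiv.Perm (Fin (m F))) {d : Set (V m × V m)}
    (h : IsAcyclicOrientation (graphT S m) d) :
    IsAcyclicOrientation (graphT S m) (act σ d) := by
  obtain ⟨⟨h1, h2⟩, h3⟩ := h
  set τ : ∀ F, Equiv.Perm (Fin (m F)) := fun F => (σ F)⁻¹ with hτ
  refine ⟨⟨fun u v => ?_, fun u v hd hd' => h2 _ _ hd hd'⟩, fun v hv => ?_⟩
  · show ((ve τ u, ve τ v) ∈ d ∨ (ve τ v, ve τ u) ∈ d) ↔ _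
    rw [h1, ← adj_ve (S := S) σ (ve τ u) (ve τ v), ve_ve_inv, ve_ve_inv]
  · exact h3 (ve τ v) (Relation.TransGen.lift (ve τ) (fun a b hab => hab) _ _ hv)

lemma mem_iff_lt {d : Set (V m × V m)}
    (hd : IsOrientation (graphT S m) d)
    (hpre : ∀ (F : ι) (i i' : Fin (m F)), i < i' → ((⟨F, i⟩ : V m), (⟨F, i'⟩ : V m)) ∈ d)
    (F : ι) (i j : Fin (m F)) :
    ((⟨F, i⟩ : V m), (⟨F, j⟩ : V m)) ∈ d ↔ i < j := by
  constructor
  · intro h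
    rcases lt_trichotomy i j with h' | h' | h'
    · exact h'
    · exfalso; subst h'
      exact (graphT S m).loopless.irrefl _ ((hd.1 _ _).mp (Or.inl h))
    · exact absurd h (hd.2 _ _ (hpre F j i h'))
  · exact hpre F i j

lemma clique_adj (hS : ∀ F, (S F).Nonempty) (F : ι) {i j : Fin (m F)} (h : i ≠ j) :
    (graphT S m).Adj (⟨F, i⟩ : V m) (⟨F, j⟩ : V m) := by
  refine ⟨fun hc => h ?_, by simpa using hS F⟩
  simpa using hc

end Stmt1Aux


open Stmt1Aux

/-- The number of acyclic orientations of `T` that, within each clique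
`{F} × {1,…,m(F)}`, agree with the prescribed order `(F,i) → (F,i')` for `i < i'`,
equals `a(T) / ∏_F m(F)!`: equivalently, their number multiplied by `∏_F m(F)!`
equals the total number `a(T)` of acyclic orientations of `T`. -/
theorem stmt1 {ι α : Type} [Fintype ι] [DecidableEq α]
    (S : ι → Finset α) (hS : ∀ F, (S F).Nonempty) (m : ι → ℕ) :
    {d : Set ((Σ F : ι, Fin (m F)) × (Σ F : ι, Fin (m F))) |
        IsAcyclicOrientation (graphT S m) d ∧
          ∀ (F : ι) (i i' : Fin (m F)), i < i' → (⟨F, i⟩, ⟨F, i'⟩) ∈ d}.ncard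
        * ∏ F : ι, (m F).factorial =
      {d : Set ((Σ F : ι, Fin (m F)) × (Σ F : ι, Fin (m F))) |
        IsAcyclicOrientation (graphT S m) d}.ncard := by
  classical
  let A : Set (Set (V m × V m)) := {d | IsAcyclicOrientation (graphT S m) d ∧
      ∀ (F : ι) (i i' : Fin (m F)), i < i' → (⟨F, i⟩, ⟨F, i'⟩) ∈ d}
  let B : Set (Set (V m × V m)) := {d | IsAcyclicOrientation (graphT S m) d}
  show A.ncard * (∏ F : ι, (m F).factorial) = B.ncard
  let Φ : ((∀ F, Equiv.Perm (Fin (m F))) × A) → B :=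
    fun p => ⟨act p.1 p.2.1, isAcyclicOrientation_act p.1 p.2.2.1⟩
  have hΦbij : Function.Bijective Φ := by
    constructor
    · rintro ⟨σ, d, hd⟩ ⟨σ', d', hd'⟩ h
      have h' : act σ (d : Set (V m × V m)) = act σ' d' := congrArg Subtype.val h
      have hmem : ∀ (F : ι) (a b : Fin (m F)),
          ((σ F)⁻¹ a < (σ F)⁻¹ b ↔ (σ' F)⁻¹ a < (σ' F)⁻¹ b) := by
        intro F a b
        have h1 := mem_iff_lt hd.1.1 hd.2 F ((σ F)⁻¹ a) ((σ F)⁻¹ b)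
        have h2 := mem_iff_lt hd'.1.1 hd'.2 F ((σ' F)⁻¹ a) ((σ' F)⁻¹ b)
        have hthis : ((⟨F, a⟩ : V m), (⟨F, b⟩ : V m)) ∈ act σ (d : Set (V m × V m)) ↔
            ((⟨F, a⟩ : V m), (⟨F, b⟩ : V m)) ∈ act σ' (d' : Set (V m × V m)) := by rw [h']
        rw [← h1, ← h2]
        exact hthis
      have hσ : σ = σ' := by
        funext F
        have hsm : StrictMono (((σ' F)⁻¹ * σ F : Equiv.Perm (Fin (m F))) :
            Fin (m F) → Fin (m F)) := by
          intro i j hij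
          have := (hmem F (σ F i) (σ F j)).mp (by simpa using hij)
          simpa using this
        have h1 := perm_eq_one_of_strictMono _ hsm
        exact (inv_mul_eq_one.mp h1).symm
      subst hσ
      have hdd : (d : Set (V m × V m)) = d' := by
        ext ⟨u, v⟩
        rw [← mem_act_ve σ d u v, ← mem_act_ve σ d' u v, h']
      exact Prod.ext rfl (Subtype.ext hdd)
    · rintro ⟨D, hD⟩
      have hD' : IsAcyclicOrientation (graphT S m) D := hD
      have htot : ∀ (F : ι) (i j : Fin (m F)), i ≠ j →
          ((⟨F, i⟩ : V m), (⟨F, j⟩ : V m)) ∈ D ∨ ((⟨F, j⟩ : V m), (⟨F, i⟩ : V m)) ∈ D :=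
        fun F i j h => (hD'.1.1 _ _).mpr (clique_adj hS F h)
      have hasymm : ∀ (F : ι) (i j : Fin (m F)),
          ((⟨F, i⟩ : V m), (⟨F, j⟩ : V m)) ∈ D → ¬ ((⟨F, j⟩ : V m), (⟨F, i⟩ : V m)) ∈ D :=
        fun F i j hij => hD'.1.2 _ _ hij
      have htrans : ∀ (F : ι) (i j k : Fin (m F)),
          ((⟨F, i⟩ : V m), (⟨F, j⟩ : V m)) ∈ D → ((⟨F, j⟩ : V m), (⟨F, k⟩ : V m)) ∈ D →
          ((⟨F, i⟩ : V m), (⟨F, k⟩ : V m)) ∈ D := by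
        intro F i j k hij hjk
        rcases eq_or_ne i k with rfl | hik
        · exact absurd hjk (hasymm F i j hij)
        · rcases htot F i k hik with hh | hh
          · exact hh
          · exact absurd
              (Relation.TransGen.tail (Relation.TransGen.tail
                (Relation.TransGen.single (hij :
                  (fun a b => (a, b) ∈ D) (⟨F, i⟩ : V m) (⟨F, j⟩ : V m))) hjk) hh)
              (hD'.2 (⟨F, i⟩ : V m))
      choose σ hσ using fun F => exists_perm_order
        (fun i j => ((⟨F, i⟩ : V m), (⟨F, j⟩ : V m)) ∈ D)
        (hasymm F) (htrans F) (htot F)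
      refine ⟨⟨σ, ⟨act (fun F => (σ F)⁻¹) D, ?_, ?_⟩⟩, ?_⟩
      · exact isAcyclicOrientation_act _ hD'
      · intro F i i' hii'
        show ((⟨F, ((σ F)⁻¹)⁻¹ i⟩ : V m), (⟨F, ((σ F)⁻¹)⁻¹ i'⟩ : V m)) ∈ D
        simp only [inv_inv]
        exact (hσ F i i').mpr hii'
      · exact Subtype.ext (act_act_inv σ D)
  have hcard := Nat.card_congr (Equiv.ofBijective Φ hΦbij)
  have hperm : ∀ F : ι, Nat.card (Equiv.Perm (Fin (m F))) = (m F).factorial := by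
    intro F
    rw [Nat.card_eq_fintype_card, Fintype.card_perm, Fintype.card_fin]
  rw [Nat.card_prod, Nat.card_pi] at hcard
  simp only [hperm] at hcard
  rw [← Nat.card_coe_set_eq, ← Nat.card_coe_set_eq, ← hcard, mul_comm]
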